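/- If every term of a DNF φ over variables V has at most k literals and there is a v-tree T over V, then φ admits a DNNF respecting T of size O(ℓ·k·|V|) where ℓ is the number of terms; if moreover φ is unambiguous, the resulting circuit is deterministic (a d-SDNNF). -/

import Mathlib

/-- Circuits in negation normal form over variables `V` (fan-in two, constants,
literals at the leaves). -/
inductive NNF (V : Type) where
  | tru : NNF V
  | fls : NNF V
  | var (v : V) : NNF V
  | nvar (v : V) : NNF V
  | and (l r : NNF V) : NNF V
  | or (l r : NNF V) : NNF V

namespace NNF

def eval {V : Type} : NNF V → (V → Bool) → Bool
  | tru, _ => true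
  | fls, _ => false
  | var v, α => α v
  | nvar v, α => !(α v)
  | and l r, α => l.eval α && r.eval α
  | or l r, α => l.eval α || r.eval α

/-- Number of nodes. -/
def size {V : Type} : NNF V → ℕ
  | and l r => l.size + r.size + 1
  | or l r => l.size + r.size + 1
  | _ => 1

/-- Variables occurring in the circuit. -/
def vars {V : Type} : NNF V → Set V
  | tru => ∅
  | fls => ∅
  | var v => {v}
  | nvar v => {v}
  | and l r => l.vars ∪ r.vars
  | or l r => l.vars ∪ r.vars

/-- Decomposability: the children of every ∧-node have disjoint variables. -/
def Decomposable {V : Type} : NNF V → Prop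
  | and l r => l.vars ∩ r.vars = ∅ ∧ l.Decomposable ∧ r.Decomposable
  | or l r => l.Decomposable ∧ r.Decomposable
  | _ => True

/-- Determinism: the children of every ∨-node have disjoint sets of satisfying
assignments (over the full domain). -/
def Deterministic {V : Type} : NNF V → Prop
  | and l r => l.Deterministic ∧ r.Deterministic
  | or l r => (∀ α, ¬(l.eval α = true ∧ r.eval α = true)) ∧
      l.Deterministic ∧ r.Deterministic
  | _ => True

end NNF

/-- v-trees: full rooted binary trees with leaves labelled by variables. -/
inductive VTree (V : Type) where
  | leaf (v : V) : VTree V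
  | node (l r : VTree V) : VTree V

namespace VTree

def leaves {V : Type} : VTree V → Set V
  | leaf v => {v}
  | node l r => l.leaves ∪ r.leaves

def leafList {V : Type} : VTree V → List V
  | leaf v => [v]
  | node l r => l.leafList ++ r.leafList

def subtrees {V : Type} : VTree V → Set (VTree V)
  | leaf v => {leaf v}
  | node l r => insert (node l r) (l.subtrees ∪ r.subtrees)

/-- A v-tree over `V`: its leaves are in 1-1 correspondence with the elements of `V`. -/
def IsOver {V : Type} (T : VTree V) : Prop :=
  T.leafList.Nodup ∧ T.leaves = Set.univ

end VTree

/-- The structuredness condition: every ∧-node decomposes along some node of `T`. -/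
def NNF.Respects {V : Type} (T : VTree V) : NNF V → Prop
  | NNF.and l r => (∃ tl tr : VTree V, VTree.node tl tr ∈ T.subtrees ∧
      l.vars ⊆ tl.leaves ∧ r.vars ⊆ tr.leaves) ∧ l.Respects T ∧ r.Respects T
  | NNF.or l r => l.Respects T ∧ r.Respects T
  | _ => True

/-- Satisfaction of a term given by positive/negative literal indicators. -/
def satTerm {V : Type} (pos neg : V → Bool) (α : V → Bool) : Prop :=
  (∀ v, pos v = true → α v = true) ∧ (∀ v, neg v = true → α v = false)


section Aux

open NNF

lemma VTree.leaves_eq {V : Type} (t : VTree V) : t.leaves = {x | x ∈ t.leafList} := by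
  induction t with
  | leaf v => ext x; simp [VTree.leaves, VTree.leafList]
  | node l r ihl ihr => ext x; simp [VTree.leaves, VTree.leafList, ihl, ihr]

lemma VTree.self_mem_subtrees {V : Type} (t : VTree V) : t ∈ t.subtrees := by
  cases t <;> simp [VTree.subtrees]

lemma VTree.nonempty {V : Type} (t : VTree V) : Nonempty V := by
  induction t with
  | leaf v => exact ⟨v⟩
  | node l r ih _ => exact ih

namespace NNF

variable {V : Type}

/-- Circuit for a single term, built along the v-tree. -/
def termC (p n : V → Bool) : VTree V → NNF V
  | .leaf v => if p v then (if n v then fls else var v)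
      else if n v then nvar v else tru
  | .node l r => and (termC p n l) (termC p n r)

lemma termC_vars (p n : V → Bool) (t : VTree V) :
    (termC p n t).vars ⊆ t.leaves := by
  induction t with
  | leaf v =>
    simp only [termC]
    split_ifs <;> simp [vars, VTree.leaves]
  | node l r ihl ihr =>
    simp only [termC, vars, VTree.leaves]
    exact Set.union_subset_union ihl ihr

lemma termC_size (p n : V → Bool) (t : VTree V) :
    (termC p n t).size + 1 ≤ 2 * t.leafList.length := by
  induction t with
  | leaf v =>
    simp only [termC]
    split_ifs <;> simp [size, VTree.leafList]
  | node l r ihl ihr =>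
    simp only [termC, size, VTree.leafList, List.length_append]
    omega

lemma termC_eval (p n : V → Bool) (t : VTree V) (α : V → Bool) :
    (termC p n t).eval α = true ↔
      ∀ v ∈ t.leaves, (p v = true → α v = true) ∧ (n v = true → α v = false) := by
  induction t with
  | leaf v =>
    simp only [termC]
    split_ifs with h1 h2 <;>
      cases hv : α v <;>
        simp_all [eval, VTree.leaves]
  | node l r ihl ihr =>
    simp only [termC, eval, Bool.and_eq_true, ihl, ihr, VTree.leaves, Set.mem_union]
    constructor
    · rintro ⟨hl, hr⟩ v (hv | hv)
      · exact hl v hv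
      · exact hr v hv
    · intro h
      exact ⟨fun v hv => h v (Or.inl hv), fun v hv => h v (Or.inr hv)⟩

lemma termC_decomp (p n : V → Bool) (t : VTree V) (h : t.leafList.Nodup) :
    (termC p n t).Decomposable := by
  induction t with
  | leaf v =>
    simp only [termC]
    split_ifs <;> trivial
  | node l r ihl ihr =>
    simp only [VTree.leafList, List.nodup_append] at h
    refine ⟨?_, ihl h.1, ihr h.2.1⟩
    apply Set.eq_empty_iff_forall_notMem.mpr
    intro x hx
    have hxl : x ∈ l.leaves := termC_vars p n l hx.1
    have hxr : x ∈ r.leaves := termC_vars p n r hx.2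
    rw [VTree.leaves_eq] at hxl hxr
    exact h.2.2 x hxl x hxr rfl

lemma termC_respects (p n : V → Bool) (T : VTree V) (t : VTree V)
    (h : t.subtrees ⊆ T.subtrees) : (termC p n t).Respects T := by
  induction t with
  | leaf v =>
    simp only [termC]
    split_ifs <;> trivial
  | node l r ihl ihr =>
    refine ⟨⟨l, r, h (VTree.self_mem_subtrees _), termC_vars p n l, termC_vars p n r⟩,
      ihl ?_, ihr ?_⟩
    · intro s hs
      apply h
      simp only [VTree.subtrees]
      exact Set.mem_insert_iff.mpr (Or.inr (Set.mem_union_left _ hs))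
    · intro s hs
      apply h
      simp only [VTree.subtrees]
      exact Set.mem_insert_iff.mpr (Or.inr (Set.mem_union_right _ hs))

lemma termC_det (p n : V → Bool) (t : VTree V) : (termC p n t).Deterministic := by
  induction t with
  | leaf v =>
    simp only [termC]
    split_ifs <;> trivial
  | node l r ihl ihr => exact ⟨ihl, ihr⟩

/-- Disjunction of `f 0, ..., f (m-1)`. -/
def ors (f : ℕ → NNF V) : ℕ → NNF V
  | 0 => fls
  | m + 1 => or (f m) (ors f m)

lemma ors_eval (f : ℕ → NNF V) (m : ℕ) (α : V → Bool) :
    (ors f m).eval α = true ↔ ∃ i < m, (f i).eval α = true := by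
  induction m with
  | zero => simp [ors, eval]
  | succ m ih =>
    simp only [ors, eval, Bool.or_eq_true, ih]
    constructor
    · rintro (h | ⟨i, hi, h⟩)
      · exact ⟨m, Nat.lt_succ_self m, h⟩
      · exact ⟨i, Nat.lt_succ_of_lt hi, h⟩
    · rintro ⟨i, hi, h⟩
      rcases Nat.lt_succ_iff_lt_or_eq.mp hi with hi | rfl
      · exact Or.inr ⟨i, hi, h⟩
      · exact Or.inl h

lemma ors_size (f : ℕ → NNF V) (m s : ℕ) (h : ∀ i < m, (f i).size ≤ s) :
    (ors f m).size ≤ m * (s + 1) + 1 := by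
  induction m with
  | zero => simp [ors, size]
  | succ m ih =>
    have h1 := ih (fun i hi => h i (Nat.lt_succ_of_lt hi))
    have h2 := h m (Nat.lt_succ_self m)
    have : (ors f (m + 1)).size = (f m).size + (ors f m).size + 1 := rfl
    rw [this, Nat.succ_mul]
    omega

lemma ors_decomp (f : ℕ → NNF V) (m : ℕ) (h : ∀ i < m, (f i).Decomposable) :
    (ors f m).Decomposable := by
  induction m with
  | zero => trivial
  | succ m ih =>
    exact ⟨h m (Nat.lt_succ_self m), ih (fun i hi => h i (Nat.lt_succ_of_lt hi))⟩

lemma ors_respects (T : VTree V) (f : ℕ → NNF V) (m : ℕ)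
    (h : ∀ i < m, (f i).Respects T) : (ors f m).Respects T := by
  induction m with
  | zero => trivial
  | succ m ih =>
    exact ⟨h m (Nat.lt_succ_self m), ih (fun i hi => h i (Nat.lt_succ_of_lt hi))⟩

lemma ors_det (f : ℕ → NNF V) (m : ℕ)
    (hd : ∀ i < m, (f i).Deterministic)
    (hdisj : ∀ i < m, ∀ j < m, i ≠ j →
      ∀ α, ¬((f i).eval α = true ∧ (f j).eval α = true)) :
    (ors f m).Deterministic := by
  induction m with
  | zero => trivial
  | succ m ih =>
    refine ⟨?_, hd m (Nat.lt_succ_self m),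
      ih (fun i hi => hd i (Nat.lt_succ_of_lt hi))
        (fun i hi j hj => hdisj i (Nat.lt_succ_of_lt hi) j (Nat.lt_succ_of_lt hj))⟩
    rintro α ⟨h1, h2⟩
    rw [ors_eval] at h2
    obtain ⟨i, hi, he⟩ := h2
    exact hdisj m (Nat.lt_succ_self m) i (Nat.lt_succ_of_lt hi)
      (Nat.ne_of_gt hi) α ⟨h1, he⟩

end NNF

end Aux

/-- If every term of a DNF `φ` over variables `V` has at most `k`
literals and `T` is a v-tree over `V`, then `φ` admits a DNNF respecting `T` of size
`O(ℓ·k·|V|)` where `ℓ` is the number of terms; if moreover `φ` is unambiguous, the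
resulting circuit is deterministic (a d-SDNNF). -/
theorem dnf_to_structured_dnnf
    (V : Type) [Fintype V] [DecidableEq V]
    (ℓ k : ℕ) (pos neg : Fin ℓ → V → Bool)
    (hk : ∀ t : Fin ℓ,
      (Finset.univ.filter (fun v : V => pos t v = true ∨ neg t v = true)).card ≤ k)
    (T : VTree V) (hT : T.IsOver) :
    ∃ C : NNF V,
      (∀ α, C.eval α = true ↔ ∃ t, satTerm (pos t) (neg t) α) ∧
      C.Decomposable ∧
      C.Respects T ∧
      C.size ≤ 3 * ℓ * k * Fintype.card V + 3 ∧
      ((∀ (α : V → Bool) (t₁ t₂ : Fin ℓ),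
          satTerm (pos t₁) (neg t₁) α → satTerm (pos t₂) (neg t₂) α → t₁ = t₂) →
        C.Deterministic) := by

  rcases Nat.eq_zero_or_pos ℓ with rfl | hℓ
  · refine ⟨NNF.fls, ?_, trivial, trivial, ?_, fun _ => trivial⟩
    · intro α
      simp only [NNF.eval]
      constructor
      · intro h; exact absurd h (by simp)
      · rintro ⟨t, _⟩; exact t.elim0
    · simp [NNF.size]
  rcases Nat.eq_zero_or_pos k with rfl | hk1
  · -- all terms are empty, hence trivially true
    have hall : ∀ t : Fin ℓ, ∀ v : V, pos t v = false ∧ neg t v = false := by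
      intro t v
      have := hk t
      rw [Nat.le_zero, Finset.card_eq_zero] at this
      have hv : v ∉ Finset.univ.filter
          (fun v : V => pos t v = true ∨ neg t v = true) := by
        rw [this]; exact Finset.notMem_empty v
      simp only [Finset.mem_filter, Finset.mem_univ, true_and] at hv
      push_neg at hv
      exact ⟨Bool.eq_false_iff.mpr (fun h => hv.1 h), Bool.eq_false_iff.mpr (fun h => hv.2 h)⟩
    refine ⟨NNF.tru, ?_, trivial, trivial, by simp [NNF.size], fun _ => trivial⟩
    intro α
    simp only [NNF.eval, true_iff]
    refine ⟨⟨0, hℓ⟩, fun v hv => ?_, fun v hv => ?_⟩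
    · exact absurd hv (by simp [(hall ⟨0, hℓ⟩ v).1])
    · exact absurd hv (by simp [(hall ⟨0, hℓ⟩ v).2])
  · -- the main case
    obtain ⟨hnodup, hleaves⟩ := hT
    set c := Fintype.card V with hc
    have hc1 : 1 ≤ c := Fintype.card_pos_iff.mpr (VTree.nonempty T)
    set f : ℕ → NNF V := fun i =>
      if h : i < ℓ then NNF.termC (pos ⟨i, h⟩) (neg ⟨i, h⟩) T else NNF.fls with hf
    have hfeval : ∀ (i : ℕ) (h : i < ℓ) (α : V → Bool),
        (f i).eval α = true ↔ satTerm (pos ⟨i, h⟩) (neg ⟨i, h⟩) α := by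
      intro i h α
      simp only [hf, dif_pos h, NNF.termC_eval, hleaves, Set.mem_univ, forall_true_left,
        true_implies]
      unfold satTerm
      constructor
      · intro ha; exact ⟨fun v => (ha v).1, fun v => (ha v).2⟩
      · intro ha v; exact ⟨ha.1 v, ha.2 v⟩
    refine ⟨NNF.ors f ℓ, ?_, ?_, ?_, ?_, ?_⟩
    · intro α
      rw [NNF.ors_eval]
      constructor
      · rintro ⟨i, hi, h⟩
        exact ⟨⟨i, hi⟩, (hfeval i hi α).mp h⟩
      · rintro ⟨t, ht⟩
        exact ⟨t.1, t.2, (hfeval t.1 t.2 α).mpr (by cases t; exact ht)⟩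
    · refine NNF.ors_decomp f ℓ (fun i hi => ?_)
      simp only [hf, dif_pos hi]
      exact NNF.termC_decomp _ _ T hnodup
    · refine NNF.ors_respects T f ℓ (fun i hi => ?_)
      simp only [hf, dif_pos hi]
      exact NNF.termC_respects _ _ T T (fun s hs => hs)
    · have hlen : T.leafList.length ≤ c := hnodup.length_le_card
      have hs : ∀ i < ℓ, (f i).size ≤ 2 * c := by
        intro i hi
        simp only [hf, dif_pos hi]
        have := NNF.termC_size (pos ⟨i, hi⟩) (neg ⟨i, hi⟩) T
        omega
      have h1 := NNF.ors_size f ℓ (2 * c) hs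
      have h2 : ℓ * (2 * c + 1) + 1 ≤ 3 * ℓ * k * c + 3 := by
        have e1 : ℓ * 1 ≤ ℓ * c := Nat.mul_le_mul_left ℓ hc1
        have e2 : 3 * (ℓ * c) * 1 ≤ 3 * (ℓ * c) * k := Nat.mul_le_mul_left _ hk1
        have e3 : 3 * ℓ * k * c = 3 * (ℓ * c) * k := by ring
        have e4 : ℓ * (2 * c + 1) = 2 * (ℓ * c) + ℓ := by ring
        omega
      exact le_trans h1 h2
    · intro hunamb
      refine NNF.ors_det f ℓ (fun i hi => ?_) (fun i hi j hj hij α hcontra => ?_)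
      · simp only [hf, dif_pos hi]
        exact NNF.termC_det _ _ T
      · have h1 := (hfeval i hi α).mp hcontra.1
        have h2 := (hfeval j hj α).mp hcontra.2
        have := hunamb α ⟨i, hi⟩ ⟨j, hj⟩ h1 h2
        exact hij (by injection this)
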